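/- arXiv:2009.11391 — 4 statements merged into one kernel-verified Lean document; each statement's English description precedes it below -/
import Mathlib

section
/- Let X ⊂ ℙV be a projective variety and let ℙE ⊂ σ_r(X) be an (r−1)-plane that arises as a limit E = lim_{t→0} ⟨x_1(t), …, x_r(t)⟩ in the Grassmannian G(r,V), where each x_j(t) ∈ X and the points are linearly independent for t ≠ 0. Then there exists a complete flag E_1 ⊂ E_2 ⊂ ⋯ ⊂ E_r = E such that ℙE_j ⊂ σ_j(X) for all 1 ≤ j ≤ r. -/
open scoped BigOperators Topology
open Filter Matrix

/-- The (affine cone over the) `r`-th secant variety of a cone `X ⊆ ℂⁿ`: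
the closure of the set of sums of `r` points of `X` (equivalently, of the union of
the spans of `r` points of `X`, when `X` is a cone). -/
noncomputable def secantCone {n : ℕ} (X : Set (Fin n → ℂ)) (r : ℕ) : Set (Fin n → ℂ) :=
  closure {v | ∃ x : Fin r → (Fin n → ℂ), (∀ i, x i ∈ X) ∧ v = ∑ i, x i}

/-- The Plücker coordinate vector of an `r`-tuple of vectors in `ℂⁿ`, whose entries are the
`r × r` minors; up to scale it records the point of the Grassmannian `G(r, ℂⁿ)` spanned by
the tuple. -/
noncomputable def pluecker {n r : ℕ} (x : Fin r → (Fin n → ℂ)) : (Fin r → Fin n) → ℂ :=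
  fun σ => Matrix.det (Matrix.of fun i j => x i (σ j))

lemma exists_pluecker_ne_zero {n m : ℕ} {w : Fin m → (Fin n → ℂ)}
    (hw : LinearIndependent ℂ w) : ∃ σ : Fin m → Fin n, pluecker w σ ≠ 0 := by
  classical
  set A : Matrix (Fin m) (Fin n) ℂ := Matrix.of w with hA
  have hrank : A.rank = m := by
    exact (by simpa using hw.rank_matrix : Matrix.rank w = m)
  have hcols : Submodule.span ℂ (Set.range Aᵀ) = ⊤ := by
    apply Submodule.eq_top_of_finrank_eq
    have := Matrix.rank_eq_finrank_span_cols A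
    rw [hrank] at this
    rw [Module.finrank_fin_fun]
    exact this.symm
  obtain ⟨s, hsub, hspan, hind⟩ := exists_linearIndependent ℂ (Set.range Aᵀ)
  have hstop : Submodule.span ℂ s = ⊤ := by rw [hspan, hcols]
  let b : Module.Basis s ℂ (Fin m → ℂ) := Module.Basis.mk hind (by rw [Subtype.range_val, hstop])
  let eqv : s ≃ Fin m := b.indexEquiv (Pi.basisFun ℂ (Fin m))
  have hpre : ∀ v : s, ∃ j : Fin n, Aᵀ j = (v : Fin m → ℂ) := fun v => hsub v.2
  choose σ' hσ' using hpre
  refine ⟨fun k => σ' (eqv.symm k), ?_⟩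
  have hcols' : LinearIndependent ℂ fun k : Fin m => Aᵀ (σ' (eqv.symm k)) := by
    have : (fun k : Fin m => Aᵀ (σ' (eqv.symm k)))
        = (Subtype.val ∘ eqv.symm : Fin m → (Fin m → ℂ)) := by
      funext k; simp [hσ']
    rw [this]
    exact hind.comp _ eqv.symm.injective
  set B : Matrix (Fin m) (Fin m) ℂ := Matrix.of fun i k => w i (σ' (eqv.symm k)) with hB
  have hBt : ∀ k, Bᵀ k = Aᵀ (σ' (eqv.symm k)) := by
    intro k; funext i; rfl
  have : IsUnit B := by
    rw [← Matrix.linearIndependent_cols_iff_isUnit]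
    have h' : B.col = fun k => Aᵀ (σ' (eqv.symm k)) := funext hBt
    rw [h']
    exact hcols'
  have hdet : B.det ≠ 0 := by
    rcases (Matrix.isUnit_iff_isUnit_det B).mp this with h
    exact h.ne_zero
  exact hdet

lemma det_cons_expand {n r : ℕ} (v : Fin n → ℂ) (y : Fin r → (Fin n → ℂ))
    (τ : Fin (r + 1) → Fin n) :
    Matrix.det (Matrix.of fun i j => (Fin.cons v y : Fin (r + 1) → (Fin n → ℂ)) i (τ j))
      = ∑ j : Fin (r + 1), (-1) ^ (j : ℕ) * v (τ j)
          * pluecker y (fun b => τ (j.succAbove b)) := by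
  rw [Matrix.det_succ_row_zero]
  refine Finset.sum_congr rfl fun j _ => ?_
  have h1 : (Matrix.of fun i j' => (Fin.cons v y : Fin (r + 1) → (Fin n → ℂ)) i (τ j')) 0 j
      = v (τ j) := by simp
  have h2 : ((Matrix.of fun i j' => (Fin.cons v y : Fin (r + 1) → (Fin n → ℂ)) i (τ j')).submatrix
      Fin.succ j.succAbove) = Matrix.of (fun a b => y a (τ (j.succAbove b))) := by
    ext a b; simp [Fin.cons_succ]
  rw [h1, h2]
  rfl

lemma mem_span_of_forall_det {n r : ℕ} {v : Fin n → ℂ} {y : Fin r → (Fin n → ℂ)}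
    (h : ∀ τ : Fin (r + 1) → Fin n,
      Matrix.det (Matrix.of fun i j => (Fin.cons v y : Fin (r + 1) → (Fin n → ℂ)) i (τ j)) = 0) :
    v ∈ Submodule.span ℂ (Set.range y) ∨ ¬ LinearIndependent ℂ y := by
  by_cases hy : LinearIndependent ℂ y
  · left
    by_contra hv
    obtain ⟨τ, hτ⟩ := exists_pluecker_ne_zero (hy.fin_cons hv)
    exact hτ (h τ)
  · right; exact hy

lemma span_eq_of_pluecker_smul {n r : ℕ} {e u : Fin r → (Fin n → ℂ)}
    (he : LinearIndependent ℂ e) (hu : LinearIndependent ℂ u) {lam : ℂ} (hlam : lam ≠ 0)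
    (h : pluecker e = lam • pluecker u) :
    Submodule.span ℂ (Set.range e) = Submodule.span ℂ (Set.range u) := by
  have hle : Submodule.span ℂ (Set.range e) ≤ Submodule.span ℂ (Set.range u) := by
    rw [Submodule.span_le]
    rintro _ ⟨i, rfl⟩
    have key : ∀ τ : Fin (r + 1) → Fin n,
        Matrix.det (Matrix.of fun a j => (Fin.cons (e i) u : Fin (r + 1) → (Fin n → ℂ)) a (τ j))
          = 0 := by
      intro τ
      have h0 : Matrix.det (Matrix.of fun a j =>
          (Fin.cons (e i) e : Fin (r + 1) → (Fin n → ℂ)) a (τ j)) = 0 := by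
        apply Matrix.det_zero_of_row_eq (i := 0) (j := i.succ) (Fin.succ_ne_zero i).symm
        funext j; simp [Fin.cons_succ]
      rw [det_cons_expand] at h0 ⊢
      have : ∑ j : Fin (r + 1), (-1) ^ (j : ℕ) * e i (τ j)
          * pluecker u (fun b => τ (j.succAbove b))
          = lam⁻¹ * ∑ j : Fin (r + 1), (-1) ^ (j : ℕ) * e i (τ j)
            * pluecker e (fun b => τ (j.succAbove b)) := by
        rw [Finset.mul_sum]
        refine Finset.sum_congr rfl fun j _ => ?_
        rw [h]
        simp [Pi.smul_apply, smul_eq_mul]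
        field_simp
      rw [this, h0, mul_zero]
    rcases mem_span_of_forall_det key with hv | hnot
    · exact hv
    · exact absurd hu hnot
  apply Submodule.eq_of_le_of_finrank_le hle
  rw [finrank_span_eq_card he, finrank_span_eq_card hu]

lemma pluecker_smul_of_span {n r : ℕ} {a b : Fin r → (Fin n → ℂ)}
    (ha : LinearIndependent ℂ a)
    (hmem : ∀ i, a i ∈ Submodule.span ℂ (Set.range b)) :
    ∃ d : ℂ, d ≠ 0 ∧ pluecker a = d • pluecker b := by
  classical
  have h' : ∀ i, ∃ cM : Fin r → ℂ, ∑ l, cM l • b l = a i := by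
    intro i; exact (Submodule.mem_span_range_iff_exists_fun ℂ).mp (hmem i)
  choose M hM using h'
  refine ⟨Matrix.det (Matrix.of M), ?_, ?_⟩
  · intro hdet
    obtain ⟨v, hv0, hv⟩ := Matrix.exists_vecMul_eq_zero_iff.mpr hdet
    have hsum : ∑ i, v i • a i = 0 := by
      have h1 : ∑ i, v i • a i = ∑ l, (Matrix.vecMul v (Matrix.of M) l) • b l := by
        simp only [← hM, Finset.smul_sum, smul_smul, Matrix.vecMul, dotProduct,
          Finset.sum_smul, Matrix.of_apply]
        exact Finset.sum_comm
      rw [h1, hv]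
      simp
    exact hv0 (funext fun i => Fintype.linearIndependent_iff.mp ha _ hsum i)
  · funext σ
    have hmat : (Matrix.of fun i j => a i (σ j))
        = (Matrix.of M) * (Matrix.of fun l j => b l (σ j)) := by
      ext i j
      rw [Matrix.mul_apply]
      have := congrFun (hM i) (σ j)
      simp only [Finset.sum_apply, Pi.smul_apply, smul_eq_mul] at this
      simpa using this.symm
    simp only [pluecker, Pi.smul_apply, smul_eq_mul]
    rw [hmat, Matrix.det_mul]

lemma pluecker_continuous {n r : ℕ} : Continuous fun y : Fin r → (Fin n → ℂ) => pluecker y := by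
  apply continuous_pi
  intro σ
  apply Continuous.matrix_det
  apply continuous_pi; intro i; apply continuous_pi; intro j
  exact (continuous_apply (σ j)).comp (continuous_apply i)

set_option maxHeartbeats 1000000 in
/-- Let `X ⊆ ℙV` be a projective variety (formalized via its closed affine cone `X ⊆ ℂⁿ`),
and let `ℙE ⊆ σ_r(X)` be an `(r−1)`-plane arising as a limit
`E = lim_{t→0} ⟨x_1(t), …, x_r(t)⟩` in the Grassmannian `G(r, V)` (formalized via convergence
of rescaled Plücker coordinates), where each `x_j(t) ∈ X` and the points are linearly
independent for `t ≠ 0`. Then there is a complete flag `E_0 ⊂ E_1 ⊂ ⋯ ⊂ E_r = E` with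
`ℙE_j ⊆ σ_j(X)` for all `j`. -/
theorem flag_of_limit_plane {n r : ℕ} (X : Set (Fin n → ℂ)) (hXcl : IsClosed X)
    (hXcone : ∀ (c : ℂ), ∀ v ∈ X, c • v ∈ X)
    (x : ℂ → Fin r → (Fin n → ℂ))
    (hxX : ∀ t : ℂ, t ≠ 0 → ∀ i, x t i ∈ X)
    (hxind : ∀ t : ℂ, t ≠ 0 → LinearIndependent ℂ (x t))
    (e : Fin r → (Fin n → ℂ)) (he : LinearIndependent ℂ e)
    (c : ℂ → ℂ)
    (hlim : Filter.Tendsto (fun t => c t • pluecker (x t)) (𝓝[≠] (0 : ℂ))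
      (𝓝 (pluecker e))) :
    ∃ E : Fin (r + 1) → Submodule ℂ (Fin n → ℂ),
      Monotone E ∧
      (∀ j, Module.finrank ℂ ↥(E j) = (j : ℕ)) ∧
      E (Fin.last r) = Submodule.span ℂ (Set.range e) ∧
      ∀ j : Fin (r + 1), (E j : Set (Fin n → ℂ)) ⊆ secantCone X (j : ℕ) := by
  classical
  -- the sequence of parameters
  set seq : ℕ → ℂ := fun k => ((1 / ((k:ℝ) + 1) : ℝ) : ℂ) with hseqdef
  have hseqne : ∀ k, seq k ≠ 0 := by
    intro k
    simp only [hseqdef, ne_eq, Complex.ofReal_eq_zero]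
    intro h
    have : (0:ℝ) < 1 / ((k:ℝ)+1) := by positivity
    linarith
  have hseqtend : Tendsto seq atTop (𝓝[≠] (0:ℂ)) := by
    rw [tendsto_nhdsWithin_iff]
    constructor
    · have h2 := (Complex.continuous_ofReal.tendsto (0:ℝ)).comp
        tendsto_one_div_add_atTop_nhds_zero_nat
      rw [hseqdef]
      simpa [Function.comp_def] using h2
    · exact Filter.Eventually.of_forall fun k => hseqne k
  set y : ℕ → Fin r → (Fin n → ℂ) := fun k => x (seq k) with hy
  have hyX : ∀ k i, y k i ∈ X := fun k i => hxX _ (hseqne k) i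
  have hyind : ∀ k, LinearIndependent ℂ (y k) := fun k => hxind _ (hseqne k)
  have hylim : Tendsto (fun k => c (seq k) • pluecker (y k)) atTop (𝓝 (pluecker e)) :=
    hlim.comp hseqtend
  -- Gram–Schmidt in Euclidean space
  let φ : (Fin n → ℂ) ≃L[ℂ] EuclideanSpace ℂ (Fin n) :=
    (PiLp.continuousLinearEquiv 2 ℂ fun _ : Fin n => ℂ).symm
  let ψ : (Fin n → ℂ) ≃ₗ[ℂ] EuclideanSpace ℂ (Fin n) := φ.toLinearEquiv
  have hψind : ∀ k, LinearIndependent ℂ (fun i => φ (y k i)) := fun k =>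
    (hyind k).map' ψ.toLinearMap ψ.ker
  haveI instWF : WellFoundedLT (Fin r) := inferInstance
  set g : ℕ → Fin r → EuclideanSpace ℂ (Fin n) :=
    fun k => InnerProductSpace.gramSchmidtNormed ℂ (fun i => φ (y k i)) with hg
  have hgnorm : ∀ k i, ‖g k i‖ = 1 := by
    intro k i
    exact InnerProductSpace.gramSchmidtNormed_unit_length i (hψind k)
  have hgortho : ∀ k, Orthonormal ℂ (g k) := fun k => InnerProductSpace.gramSchmidtNormed_orthonormal (hψind k)
  have hgspan : ∀ k (p : Fin r), Submodule.span ℂ (g k '' Set.Iic p)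
      = Submodule.span ℂ ((fun i => φ (y k i)) '' Set.Iic p) := by
    intro k p
    rw [hg]
    rw [InnerProductSpace.span_gramSchmidtNormed, InnerProductSpace.span_gramSchmidt_Iic]
  have hgspan_range : ∀ k, Submodule.span ℂ (Set.range (g k))
      = Submodule.span ℂ (Set.range (fun i => φ (y k i))) := by
    intro k
    rw [hg]
    rw [InnerProductSpace.span_gramSchmidtNormed_range, InnerProductSpace.span_gramSchmidt]
  -- compactness: pass to a convergent subsequence
  have hcpt : IsCompact (Set.univ.pi fun _ : Fin r =>
      Metric.sphere (0 : EuclideanSpace ℂ (Fin n)) 1) :=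
    isCompact_univ_pi fun _ => isCompact_sphere _ _
  have hgmem : ∀ k, g k ∈ Set.univ.pi fun _ : Fin r =>
      Metric.sphere (0 : EuclideanSpace ℂ (Fin n)) 1 := by
    intro k
    intro i _
    simp [hgnorm k i]
  obtain ⟨u, hus, sub, hsubmono, husub⟩ := hcpt.tendsto_subseq hgmem
  have hucoord : ∀ i, Tendsto (fun k => g (sub k) i) atTop (𝓝 (u i)) := by
    intro i
    exact tendsto_pi_nhds.mp husub i
  have huon : Orthonormal ℂ u := by
    rw [orthonormal_iff_ite]
    intro i j
    have h1 : Tendsto (fun k => (inner ℂ (g (sub k) i) (g (sub k) j) : ℂ)) atTop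
        (𝓝 (inner ℂ (u i) (u j))) := (hucoord i).inner (hucoord j)
    have h2 : (fun k => (inner ℂ (g (sub k) i) (g (sub k) j) : ℂ))
        = fun _ => if i = j then 1 else 0 :=
      funext fun k => orthonormal_iff_ite.mp (hgortho (sub k)) i j
    rw [h2] at h1
    exact (tendsto_nhds_unique h1 tendsto_const_nhds)
  have huind : LinearIndependent ℂ u := huon.linearIndependent
  -- back to ℂⁿ
  set w : Fin r → (Fin n → ℂ) := fun i => φ.symm (u i) with hwdef
  have hwind : LinearIndependent ℂ w := huind.map' ψ.symm.toLinearMap ψ.symm.ker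
  set wk : ℕ → Fin r → (Fin n → ℂ) := fun k i => φ.symm (g k i) with hwk
  have hwkcoord : ∀ i, Tendsto (fun k => wk (sub k) i) atTop (𝓝 (w i)) := by
    intro i
    exact (φ.symm.continuous.tendsto (u i)).comp (hucoord i)
  -- spans agree
  have hspan_full : ∀ k, Submodule.span ℂ (Set.range (wk k))
      = Submodule.span ℂ (Set.range (y k)) := by
    intro k
    have h1 : Set.range (wk k) = ψ.symm '' Set.range (g k) := by
      rw [← Set.range_comp]; rfl
    have h2 : Set.range (fun i => φ (y k i)) = ψ '' Set.range (y k) := by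
      rw [← Set.range_comp]; rfl
    calc Submodule.span ℂ (Set.range (wk k))
        = Submodule.span ℂ (⇑ψ.symm '' Set.range (g k)) := by rw [h1]
      _ = Submodule.map ψ.symm (Submodule.span ℂ (Set.range (g k))) :=
          (Submodule.map_span _ _).symm
      _ = Submodule.map ψ.symm.toLinearMap (Submodule.span ℂ (⇑ψ '' Set.range (y k))) := by
          rw [hgspan_range k, h2]
      _ = Submodule.span ℂ (⇑ψ.symm '' (⇑ψ '' Set.range (y k))) := by
          exact Submodule.map_span ψ.symm.toLinearMap _
      _ = Submodule.span ℂ (Set.range (y k)) := by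
          rw [Set.image_image]; simp
  -- change of basis determinant
  have hdk : ∀ k, ∃ d : ℂ, d ≠ 0 ∧ pluecker (y k) = d • pluecker (wk k) := by
    intro k
    apply pluecker_smul_of_span (hyind k)
    intro i
    rw [hspan_full k]
    exact Submodule.subset_span (Set.mem_range_self i)
  choose d hd0 hdeq using hdk
  set γ : ℕ → ℂ := fun k => c (seq (sub k)) * d (sub k) with hγdef
  have hγP : Tendsto (fun k => γ k • pluecker (wk (sub k))) atTop (𝓝 (pluecker e)) := by
    have h1 : Tendsto ((fun k => c (seq k) • pluecker (y k)) ∘ sub) atTop (𝓝 (pluecker e)) :=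
      hylim.comp hsubmono.tendsto_atTop
    apply h1.congr
    intro k
    show c (seq (sub k)) • pluecker (y (sub k)) = γ k • pluecker (wk (sub k))
    rw [hdeq (sub k), smul_smul]
  have hPw : Tendsto (fun k => pluecker (wk (sub k))) atTop (𝓝 (pluecker w)) := by
    have hconv : Tendsto (fun k => wk (sub k)) atTop (𝓝 w) := tendsto_pi_nhds.mpr hwkcoord
    exact (pluecker_continuous.tendsto w).comp hconv
  obtain ⟨σ₀, hσ₀⟩ := exists_pluecker_ne_zero hwind
  have hPk0 : Tendsto (fun k => pluecker (wk (sub k)) σ₀) atTop (𝓝 (pluecker w σ₀)) :=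
    tendsto_pi_nhds.mp hPw σ₀
  have hnum : Tendsto (fun k => γ k * pluecker (wk (sub k)) σ₀) atTop (𝓝 (pluecker e σ₀)) := by
    have := tendsto_pi_nhds.mp hγP σ₀
    simpa [Pi.smul_apply, smul_eq_mul] using this
  set lam : ℂ := pluecker e σ₀ / pluecker w σ₀ with hlamdef
  have hγlim : Tendsto γ atTop (𝓝 lam) := by
    have hdiv := hnum.div hPk0 hσ₀
    apply Filter.Tendsto.congr' _ hdiv
    filter_upwards [hPk0.eventually_ne hσ₀] with k hk
    simp only [Pi.div_apply]
    field_simp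
  have hEq : pluecker e = lam • pluecker w :=
    tendsto_nhds_unique hγP (hγlim.smul hPw)
  have hlam0 : lam ≠ 0 := by
    intro h0
    obtain ⟨σ₁, h1⟩ := exists_pluecker_ne_zero he
    apply h1
    rw [hEq, h0, zero_smul]
    rfl
  have hspanEq : Submodule.span ℂ (Set.range e) = Submodule.span ℂ (Set.range w) :=
    span_eq_of_pluecker_smul he hwind hlam0 hEq
  -- the flag
  refine ⟨fun j => Submodule.span ℂ (Set.range fun i : Fin (j : ℕ) => w (Fin.castLE j.is_le i)),
    ?_, ?_, ?_, ?_⟩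
  · -- monotone
    intro j j' hjj'
    apply Submodule.span_mono
    rintro _ ⟨i, rfl⟩
    refine ⟨Fin.castLE hjj' i, ?_⟩
    apply congrArg w
    apply Fin.ext
    rfl
  · -- finrank
    intro j
    have hinj : Function.Injective (Fin.castLE j.is_le) := Fin.castLE_injective _
    have hli : LinearIndependent ℂ (fun i : Fin (j : ℕ) => w (Fin.castLE j.is_le i)) :=
      hwind.comp _ hinj
    rw [finrank_span_eq_card hli, Fintype.card_fin]
  · -- top of the flag
    rw [hspanEq]
    congr 1
  · -- membership in the secant varieties
    intro j v hv
    by_cases h0 : (j : ℕ) = 0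
    · haveI : IsEmpty (Fin (j : ℕ)) := by rw [h0]; infer_instance
      simp only [Set.range_eq_empty, Submodule.span_empty, Submodule.bot_coe,
        Set.mem_singleton_iff] at hv
      subst hv
      apply subset_closure
      exact ⟨fun _ => 0, fun i => isEmptyElim i, by simp⟩
    · have hjr : (j : ℕ) ≤ r := j.is_le
      have hjpos : 0 < (j : ℕ) := Nat.pos_of_ne_zero h0
      set p : Fin r := ⟨(j : ℕ) - 1, by omega⟩ with hp
      obtain ⟨a, ha⟩ := (Submodule.mem_span_range_iff_exists_fun ℂ).mp hv
      set vk : ℕ → (Fin n → ℂ) :=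
        fun k => ∑ i : Fin (j : ℕ), a i • wk (sub k) (Fin.castLE hjr i) with hvkdef
      have hvklim : Tendsto vk atTop (𝓝 v) := by
        rw [← ha]
        apply tendsto_finset_sum
        intro i _
        exact (hwkcoord (Fin.castLE hjr i)).const_smul (a i)
      have hIic : ∀ m : ℕ, y m '' Set.Iic p
          = Set.range (fun i : Fin (j : ℕ) => y m (Fin.castLE hjr i)) := by
        intro m
        have hr : Set.Iic p = Set.range (Fin.castLE hjr) := by
          ext i
          constructor
          · intro hi
            refine ⟨⟨(i : ℕ), ?_⟩, ?_⟩
            · have := Fin.le_def.mp hi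
              simp only [hp] at this
              omega
            · apply Fin.ext; rfl
          · rintro ⟨i', rfl⟩
            rw [Set.mem_Iic, Fin.le_def]
            have hi' := i'.isLt
            show (i' : ℕ) ≤ (j : ℕ) - 1
            omega
        rw [hr, ← Set.range_comp]
        rfl
      have hvkmem : ∀ k, vk k ∈
          {v | ∃ xs : Fin (j : ℕ) → (Fin n → ℂ), (∀ i, xs i ∈ X) ∧ v = ∑ i, xs i} := by
        intro k
        have hz1 : (∑ i : Fin (j : ℕ), a i • g (sub k) (Fin.castLE hjr i))
            ∈ Submodule.span ℂ (g (sub k) '' Set.Iic p) := by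
          apply Submodule.sum_mem
          intro i _
          apply Submodule.smul_mem
          apply Submodule.subset_span
          refine ⟨Fin.castLE hjr i, ?_, rfl⟩
          rw [Set.mem_Iic, Fin.le_def]
          have := i.isLt
          show (i : ℕ) ≤ (j : ℕ) - 1
          omega
        rw [hgspan (sub k) p] at hz1
        have himg : (fun i => φ (y (sub k) i)) '' Set.Iic p
            = ⇑ψ '' (y (sub k) '' Set.Iic p) := by
          rw [Set.image_image]; rfl
        rw [himg, show Submodule.span ℂ (⇑ψ '' (y (sub k) '' Set.Iic p)) = Submodule.map ψ.toLinearMap (Submodule.span ℂ (y (sub k) '' Set.Iic p)) from (Submodule.map_span _ _).symm] at hz1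
        obtain ⟨zz, hzz, hzz2⟩ := hz1
        have hvkz : vk k = zz := by
          have hzsym : ψ.symm (∑ i : Fin (j : ℕ), a i • g (sub k) (Fin.castLE hjr i)) = zz := by
            rw [← hzz2]
            exact ψ.symm_apply_apply zz
          rw [← hzsym, hvkdef]
          simp only [map_sum, _root_.map_smul]
          rfl
        rw [hIic (sub k)] at hzz
        obtain ⟨b, hb⟩ := (Submodule.mem_span_range_iff_exists_fun ℂ).mp hzz
        refine ⟨fun i => b i • y (sub k) (Fin.castLE hjr i),
          fun i => hXcone _ _ (hyX (sub k) _), ?_⟩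
        rw [hvkz, ← hb]
      exact mem_closure_of_tendsto hvklim (Filter.Eventually.of_forall hvkmem)
end

section
/- The small Coppersmith–Winograd tensor T_{cw,q} has border rank at most q + 2. Concretely, with the (q+2) curves of rank-one tensors given by m_α(t) = t^{-2}(a_0 + t a_α)⊗(b_0 + t b_α)⊗(c_0 + t c_α) for α = 1,…,q, m_{q+1}(t) = −t^{-3}(a_0 + t²Σ_α a_α)⊗(b_0 + t²Σ_α b_α)⊗(c_0 + t²Σ_α c_α), and m_{q+2}(t) = −(q t^{-2} − t^{-3}) a_0⊗b_0⊗c_0, one has T_{cw,q} = lim_{t→0} Σ_{s=1}^{q+2} m_s(t). -/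
open scoped BigOperators Topology

/-- The border rank of a 3-way tensor `T` over `ℂ`. -/
noncomputable def tBorderRank {ι κ μ : Type*} [Fintype ι] [Fintype κ] [Fintype μ]
    (T : ι → κ → μ → ℂ) : ℕ :=
  sInf {r : ℕ | T ∈ closure {S : ι → κ → μ → ℂ |
    ∃ u : Fin r → ι → ℂ, ∃ v : Fin r → κ → ℂ, ∃ w : Fin r → μ → ℂ,
      S = fun i j k => ∑ s, u s i * v s j * w s k}}

/-- The standard basis vector `e_j` of `ℂⁿ`, as a function. -/
def stdVec {n : ℕ} (j : Fin n) : Fin n → ℂ := fun i => if i = j then 1 else 0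

/-- The small Coppersmith–Winograd tensor
`T_{cw,q} = Σ_{j=1}^q (a_0⊗b_j⊗c_j + a_j⊗b_0⊗c_j + a_j⊗b_j⊗c_0)` in
`ℂ^{q+1} ⊗ ℂ^{q+1} ⊗ ℂ^{q+1}`, in coordinates. -/
noncomputable def Tcw (q : ℕ) : Fin (q + 1) → Fin (q + 1) → Fin (q + 1) → ℂ :=
  fun i j k => ∑ l : Fin q,
    (stdVec 0 i * stdVec l.succ j * stdVec l.succ k
      + stdVec l.succ i * stdVec 0 j * stdVec l.succ k
      + stdVec l.succ i * stdVec l.succ j * stdVec 0 k)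

lemma key (q : ℕ) (t : ℂ) (ht : t ≠ 0) (A B C : ℂ) (a b c : Fin q → ℂ) :
    (∑ α : Fin q, t ^ (-2 : ℤ) * ((A + t * a α) * (B + t * b α) * (C + t * c α)))
      - t ^ (-3 : ℤ) * ((A + t ^ 2 * ∑ α, a α) * (B + t ^ 2 * ∑ α, b α) * (C + t ^ 2 * ∑ α, c α))
      - ((q : ℂ) * t ^ (-2 : ℤ) - t ^ (-3 : ℤ)) * (A * B * C)
    = (∑ α : Fin q, (A * b α * c α + a α * B * c α + a α * b α * C))
      + t * ((∑ α : Fin q, a α * b α * c α)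
          - ((∑ α, a α) * (∑ α, b α) * C + (∑ α, a α) * B * (∑ α, c α) + A * (∑ α, b α) * (∑ α, c α)))
      - t ^ 3 * ((∑ α, a α) * (∑ α, b α) * (∑ α, c α)) := by
  have h2 : t ^ (-2 : ℤ) = (t ^ 2)⁻¹ := by rw [zpow_neg, zpow_ofNat]
  have h3 : t ^ (-3 : ℤ) = (t ^ 3)⁻¹ := by rw [zpow_neg, zpow_ofNat]
  have h1 : (t : ℂ)⁻¹ * t = 1 := inv_mul_cancel₀ ht
  have hterm : ∀ x y z : ℂ, t ^ (-2 : ℤ) * ((A + t * x) * (B + t * y) * (C + t * z))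
      = t ^ (-2 : ℤ) * (A * B * C) + t⁻¹ * (x * B * C + A * y * C + A * B * z)
        + (x * y * C + x * B * z + A * y * z) + t * (x * y * z) := by
    intro x y z
    rw [h2]
    have ht2 : (t : ℂ) ^ 2 ≠ 0 := pow_ne_zero 2 ht
    field_simp
    ring
  simp only [hterm, Finset.sum_add_distrib, ← Finset.mul_sum, ← Finset.sum_mul, Finset.sum_const,
    Finset.card_univ, Fintype.card_fin, nsmul_eq_mul]
  rw [h2, h3]
  have ht2 : (t : ℂ) ^ 2 ≠ 0 := pow_ne_zero 2 ht
  have ht3 : (t : ℂ) ^ 3 ≠ 0 := pow_ne_zero 3 ht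
  field_simp
  ring

/-- `R̲(T_{cw,q}) ≤ q + 2`, witnessed by the explicit border rank decomposition
`T_{cw,q} = lim_{t→0} Σ_{s=1}^{q+2} m_s(t)` with
`m_α(t) = t^{-2}(a_0+t a_α)⊗(b_0+t b_α)⊗(c_0+t c_α)` for `α = 1,…,q`,
`m_{q+1}(t) = -t^{-3}(a_0+t²Σa_α)⊗(b_0+t²Σb_α)⊗(c_0+t²Σc_α)`, and
`m_{q+2}(t) = -(q t^{-2} - t^{-3}) a_0⊗b_0⊗c_0`. -/
theorem borderRank_Tcw_le (q : ℕ) (hq : 1 ≤ q) :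
    tBorderRank (Tcw q) ≤ q + 2 ∧
    Filter.Tendsto
      (fun t : ℂ => (fun i j k =>
        (∑ α : Fin q, t ^ (-2 : ℤ) *
          ((stdVec 0 i + t * stdVec α.succ i) * (stdVec 0 j + t * stdVec α.succ j) *
            (stdVec 0 k + t * stdVec α.succ k)))
        - t ^ (-3 : ℤ) *
          ((stdVec 0 i + t ^ 2 * ∑ α : Fin q, stdVec α.succ i) *
           (stdVec 0 j + t ^ 2 * ∑ α : Fin q, stdVec α.succ j) *
           (stdVec 0 k + t ^ 2 * ∑ α : Fin q, stdVec α.succ k))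
        - ((q : ℂ) * t ^ (-2 : ℤ) - t ^ (-3 : ℤ)) *
            (stdVec 0 i * stdVec 0 j * stdVec 0 k) :
          Fin (q + 1) → Fin (q + 1) → Fin (q + 1) → ℂ))
      (𝓝[≠] (0 : ℂ)) (𝓝 (Tcw q)) := by
  have htend : Filter.Tendsto
      (fun t : ℂ => (fun i j k =>
        (∑ α : Fin q, t ^ (-2 : ℤ) *
          ((stdVec 0 i + t * stdVec α.succ i) * (stdVec 0 j + t * stdVec α.succ j) *
            (stdVec 0 k + t * stdVec α.succ k)))
        - t ^ (-3 : ℤ) *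
          ((stdVec 0 i + t ^ 2 * ∑ α : Fin q, stdVec α.succ i) *
           (stdVec 0 j + t ^ 2 * ∑ α : Fin q, stdVec α.succ j) *
           (stdVec 0 k + t ^ 2 * ∑ α : Fin q, stdVec α.succ k))
        - ((q : ℂ) * t ^ (-2 : ℤ) - t ^ (-3 : ℤ)) *
            (stdVec 0 i * stdVec 0 j * stdVec 0 k) :
          Fin (q + 1) → Fin (q + 1) → Fin (q + 1) → ℂ))
      (𝓝[≠] (0 : ℂ)) (𝓝 (Tcw q)) := by
    refine tendsto_pi_nhds.2 fun i => tendsto_pi_nhds.2 fun j => tendsto_pi_nhds.2 fun k => ?_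
    set A := stdVec (0 : Fin (q+1)) i with hA
    set B := stdVec (0 : Fin (q+1)) j with hB
    set C := stdVec (0 : Fin (q+1)) k with hC
    set a : Fin q → ℂ := fun α => stdVec α.succ i with ha
    set b : Fin q → ℂ := fun α => stdVec α.succ j with hb
    set c : Fin q → ℂ := fun α => stdVec α.succ k with hc
    have hTcw : Tcw q i j k = ∑ α : Fin q, (A * b α * c α + a α * B * c α + a α * b α * C) := rfl
    have hpoly : Filter.Tendsto (fun t : ℂ =>
        (∑ α : Fin q, (A * b α * c α + a α * B * c α + a α * b α * C))
        + t * ((∑ α : Fin q, a α * b α * c α)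
            - ((∑ α, a α) * (∑ α, b α) * C + (∑ α, a α) * B * (∑ α, c α)
                + A * (∑ α, b α) * (∑ α, c α)))
        - t ^ 3 * ((∑ α, a α) * (∑ α, b α) * (∑ α, c α)))
        (𝓝[≠] (0 : ℂ)) (𝓝 (Tcw q i j k)) := by
      have h0 : Filter.Tendsto (fun t : ℂ =>
          (∑ α : Fin q, (A * b α * c α + a α * B * c α + a α * b α * C))
          + t * ((∑ α : Fin q, a α * b α * c α)
              - ((∑ α, a α) * (∑ α, b α) * C + (∑ α, a α) * B * (∑ α, c α)
                  + A * (∑ α, b α) * (∑ α, c α)))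
          - t ^ 3 * ((∑ α, a α) * (∑ α, b α) * (∑ α, c α)))
          (𝓝 (0 : ℂ)) (𝓝 (Tcw q i j k)) := by
        have : Continuous (fun t : ℂ =>
            (∑ α : Fin q, (A * b α * c α + a α * B * c α + a α * b α * C))
            + t * ((∑ α : Fin q, a α * b α * c α)
                - ((∑ α, a α) * (∑ α, b α) * C + (∑ α, a α) * B * (∑ α, c α)
                    + A * (∑ α, b α) * (∑ α, c α)))
            - t ^ 3 * ((∑ α, a α) * (∑ α, b α) * (∑ α, c α))) := by fun_prop
        have := this.tendsto 0
        simpa [hTcw] using this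
      exact h0.mono_left nhdsWithin_le_nhds
    refine hpoly.congr' ?_
    filter_upwards [self_mem_nhdsWithin] with t ht
    exact (key q t ht A B C a b c).symm
  constructor
  · apply Nat.sInf_le
    show Tcw q ∈ closure _
    refine mem_closure_of_tendsto htend ?_
    filter_upwards [self_mem_nhdsWithin] with t ht
    refine ⟨Fin.snoc (Fin.snoc
        (fun α : Fin q => fun i => t ^ (-2 : ℤ) * (stdVec 0 i + t * stdVec α.succ i))
        (fun i => -t ^ (-3 : ℤ) * (stdVec 0 i + t ^ 2 * ∑ α : Fin q, stdVec α.succ i)))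
        (fun i => -((q : ℂ) * t ^ (-2 : ℤ) - t ^ (-3 : ℤ)) * stdVec 0 i),
      Fin.snoc (Fin.snoc
        (fun α : Fin q => fun j => stdVec 0 j + t * stdVec α.succ j)
        (fun j => stdVec 0 j + t ^ 2 * ∑ α : Fin q, stdVec α.succ j))
        (fun j => stdVec 0 j),
      Fin.snoc (Fin.snoc
        (fun α : Fin q => fun k => stdVec 0 k + t * stdVec α.succ k)
        (fun k => stdVec 0 k + t ^ 2 * ∑ α : Fin q, stdVec α.succ k))
        (fun k => stdVec 0 k), ?_⟩
    funext i j k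
    rw [Fin.sum_univ_castSucc, Fin.sum_univ_castSucc]
    simp only [Fin.snoc_castSucc, Fin.snoc_last]
    have hsum : (∑ x : Fin q, t ^ (-2 : ℤ) * (stdVec 0 i + t * stdVec x.succ i) *
          (stdVec 0 j + t * stdVec x.succ j) * (stdVec 0 k + t * stdVec x.succ k))
        = ∑ x : Fin q, t ^ (-2 : ℤ) * ((stdVec 0 i + t * stdVec x.succ i) *
          (stdVec 0 j + t * stdVec x.succ j) * (stdVec 0 k + t * stdVec x.succ k)) :=
      Finset.sum_congr rfl fun x _ => by ring
    rw [hsum]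
    ring
  · exact htend
end

section
/- For any tensor T ∈ A ⊗ B ⊗ C and any p, the border rank satisfies R̲(T) ≥ rank(T_A^{∧p}) / C(dim A − 1, p), where T_A^{∧p} : Λ^p A ⊗ B* → Λ^{p+1} A ⊗ C is the p-th Koszul flattening. -/
open scoped BigOperators

/-- The `p`-th Koszul flattening `T_A^{∧p} : Λᵖ A ⊗ B* → Λ^{p+1} A ⊗ C` of a tensor
`T ∈ A ⊗ B ⊗ C`, `X ⊗ β ↦ Σ T^{ijk} β(b_j) (a_i ∧ X) ⊗ c_k`, written as a matrix in the
standard monomial bases of the exterior powers (indexed by subsets of the index set of a basis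
of `A`, with the usual wedge signs). -/
noncomputable def koszulFlattening {a b c : ℕ} (T : Fin a → Fin b → Fin c → ℂ) (p : ℕ) :
    Matrix ({S : Finset (Fin a) // S.card = p + 1} × Fin c)
      ({S : Finset (Fin a) // S.card = p} × Fin b) ℂ :=
  fun R C =>
    ∑ i : Fin a,
      if i ∉ C.1.1 ∧ insert i C.1.1 = R.1.1 then
        (-1 : ℂ) ^ (C.1.1.filter (fun j => j < i)).card * T i C.2 R.2
      else 0

namespace KoszulAux

open Finset Matrix

noncomputable def eps {a : ℕ} (S : Finset (Fin a)) (i : Fin a) : ℂ :=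
  (-1 : ℂ) ^ (S.filter (fun j => j < i)).card

lemma eps_insert {a : ℕ} (S : Finset (Fin a)) (i j : Fin a) (hj : j ∉ S) :
    eps (insert j S) i = eps S i * (if j < i then -1 else 1) := by
  unfold eps
  rw [Finset.filter_insert]
  by_cases h : j < i
  · rw [if_pos h, Finset.card_insert_of_notMem (by simp [hj]), if_pos h]
    ring
  · rw [if_neg h, if_neg h, mul_one]

lemma eps_swap {a : ℕ} (S : Finset (Fin a)) {i j : Fin a} (hij : i ≠ j)
    (hi : i ∉ S) (hj : j ∉ S) :
    eps (insert j S) i * eps S j = -(eps (insert i S) j * eps S i) := by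
  rw [eps_insert S i j hj, eps_insert S j i hi]
  rcases lt_or_gt_of_ne hij with h | h
  · rw [if_neg (by exact not_lt_of_gt h), if_pos h]; ring
  · rw [if_pos h, if_neg (by exact not_lt_of_gt h)]; ring

noncomputable def KMu {a : ℕ} (u : Fin a → ℂ) (p : ℕ) :
    Matrix {S : Finset (Fin a) // S.card = p + 1} {S : Finset (Fin a) // S.card = p} ℂ :=
  fun R C => ∑ i : Fin a, if i ∉ C.1 ∧ insert i C.1 = R.1 then eps C.1 i * u i else 0

lemma KMu_sq {a : ℕ} (u : Fin a → ℂ) (p : ℕ) : KMu u (p + 1) * KMu u p = 0 := by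
  classical
  ext R'' T
  rw [Matrix.mul_apply, Matrix.zero_apply]
  unfold KMu
  simp_rw [Finset.sum_mul_sum]
  rw [Finset.sum_comm]
  have hswap : ∀ R' : {S : Finset (Fin a) // S.card = p + 1},
      ∀ i j : Fin a, True := fun _ _ _ => trivial
  -- reorder to i, j outside
  have step : (∑ i : Fin a, ∑ R' : {S : Finset (Fin a) // S.card = p + 1}, ∑ j : Fin a,
      (if i ∉ R'.1 ∧ insert i R'.1 = R''.1 then eps R'.1 i * u i else 0) *
        (if j ∉ T.1 ∧ insert j T.1 = R'.1 then eps T.1 j * u j else 0))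
      = ∑ i : Fin a, ∑ j : Fin a, ∑ R' : {S : Finset (Fin a) // S.card = p + 1},
      (if i ∉ R'.1 ∧ insert i R'.1 = R''.1 then eps R'.1 i * u i else 0) *
        (if j ∉ T.1 ∧ insert j T.1 = R'.1 then eps T.1 j * u j else 0) := by
    exact Finset.sum_congr rfl fun i _ => Finset.sum_comm
  rw [step]
  set h : Fin a → Fin a → ℂ := fun i j =>
    ∑ R' : {S : Finset (Fin a) // S.card = p + 1},
      (if i ∉ R'.1 ∧ insert i R'.1 = R''.1 then eps R'.1 i * u i else 0) *
        (if j ∉ T.1 ∧ insert j T.1 = R'.1 then eps T.1 j * u j else 0) with hh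
  have key : ∀ i j : Fin a, h i j =
      if i ≠ j ∧ i ∉ T.1 ∧ j ∉ T.1 ∧ insert i (insert j T.1) = R''.1
        then eps (insert j T.1) i * eps T.1 j * (u i * u j) else 0 := by
    intro i j
    by_cases hj : j ∈ T.1
    · simp only [hh, hj, not_true_eq_false, false_and, if_false, mul_zero, Finset.sum_const_zero]
      rw [if_neg (by tauto)]
    · have hcard : (insert j T.1).card = p + 1 := by
        rw [Finset.card_insert_of_notMem hj, T.2]
      simp only [hh]
      rw [Fintype.sum_eq_single (⟨insert j T.1, hcard⟩ : {S : Finset (Fin a) // S.card = p + 1})]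
      · rw [if_pos (show j ∉ T.1 ∧ insert j T.1
            = ((⟨insert j T.1, hcard⟩ : {S : Finset (Fin a) // S.card = p + 1}) : Finset (Fin a))
            from ⟨hj, rfl⟩)]
        by_cases hcond : i ∉ insert j T.1 ∧ insert i (insert j T.1) = R''.1
        · rw [if_pos hcond, if_pos ?_]
          · ring
          · refine ⟨?_, ?_, hj, hcond.2⟩
            · rintro rfl; exact hcond.1 (Finset.mem_insert_self i T.1)
            · intro hi; exact hcond.1 (Finset.mem_insert_of_mem hi)
        · rw [if_neg hcond, if_neg ?_, zero_mul]
          rintro ⟨hij, hi, -, hins⟩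
          exact hcond ⟨by simp [Finset.mem_insert, hij, hi], hins⟩
      · intro R' hR'
        have hneg : ¬(j ∉ T.1 ∧ insert j T.1 = R'.1) := by
          rintro ⟨-, hins⟩; exact hR' (Subtype.ext hins.symm)
        rw [if_neg hneg, mul_zero]
  have hanti : ∀ i j : Fin a, h i j = - h j i := by
    intro i j
    rw [key i j, key j i]
    by_cases hc : i ≠ j ∧ i ∉ T.1 ∧ j ∉ T.1 ∧ insert i (insert j T.1) = R''.1
    · rw [if_pos hc, if_pos ⟨hc.1.symm, hc.2.2.1, hc.2.1, by rw [Finset.insert_comm]; exact hc.2.2.2⟩]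
      have := eps_swap T.1 hc.1 hc.2.1 hc.2.2.1
      rw [show eps (insert j T.1) i * eps T.1 j * (u i * u j)
          = (eps (insert j T.1) i * eps T.1 j) * (u i * u j) by ring, this]
      ring
    · rw [if_neg hc, if_neg ?_, neg_zero]
      rintro ⟨h1, h2, h3, h4⟩
      exact hc ⟨h1.symm, h3, h2, by rw [Finset.insert_comm]; exact h4⟩
  have hS : (∑ i : Fin a, ∑ j : Fin a, h i j) = - ∑ i : Fin a, ∑ j : Fin a, h i j := by
    conv_lhs => rw [Finset.sum_comm]
    rw [← Finset.sum_neg_distrib]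
    refine Finset.sum_congr rfl fun j _ => ?_
    rw [← Finset.sum_neg_distrib]
    exact Finset.sum_congr rfl fun i _ => hanti i j
  have h2 : (∑ i : Fin a, ∑ j : Fin a, h i j) + (∑ i : Fin a, ∑ j : Fin a, h i j) = 0 := by
    nth_rewrite 1 [hS]
    exact neg_add_cancel _
  exact add_self_eq_zero.mp h2

noncomputable def mcol {a : ℕ} (u : Fin a → ℂ) (p : ℕ)
    (S : {S : Finset (Fin a) // S.card = p}) : {S : Finset (Fin a) // S.card = p + 1} → ℂ :=
  fun R => KMu u p R S

lemma mcol_mem_span {a : ℕ} (u : Fin a → ℂ) (i0 : Fin a) (hu : u i0 ≠ 0) (p : ℕ)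
    (S : {S : Finset (Fin a) // S.card = p}) :
    mcol u p S ∈ Submodule.span ℂ
      (((Finset.univ.filter (fun R : {S : Finset (Fin a) // S.card = p} => i0 ∉ R.1)).image
        (mcol u p) : Finset _) : Set ({S : Finset (Fin a) // S.card = p + 1} → ℂ)) := by
  classical
  by_cases hS : i0 ∉ S.1
  · apply Submodule.subset_span
    simp only [Finset.coe_image, Set.mem_image, Finset.mem_coe, Finset.mem_filter]
    exact ⟨S, by simp [hS], rfl⟩
  push_neg at hS
  obtain ⟨p', rfl⟩ : ∃ p', p = p' + 1 := by
    refine Nat.exists_eq_succ_of_ne_zero ?_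
    intro h0
    have hc : S.1.card = 0 := by rw [S.2, h0]
    rw [Finset.card_eq_zero] at hc
    rw [hc] at hS
    exact absurd hS (Finset.notMem_empty i0)
  set T : {X : Finset (Fin a) // X.card = p'} :=
    ⟨S.1.erase i0, by rw [Finset.card_erase_of_mem hS, S.2]; omega⟩ with hT
  set y : {X : Finset (Fin a) // X.card = p' + 1} → ℂ := fun R => KMu u p' R T with hy
  have hMy : KMu u (p' + 1) *ᵥ y = 0 := by
    have h1 : y = KMu u p' *ᵥ Pi.single T 1 := by
      funext R
      rw [hy]
      simp [Matrix.mulVec_single]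
    rw [h1, Matrix.mulVec_mulVec, KMu_sq, Matrix.zero_mulVec]
  have hsum : (∑ R : {X : Finset (Fin a) // X.card = p' + 1},
      y R • mcol u (p' + 1) R) = 0 := by
    funext R''
    have := congrFun hMy R''
    simp only [Matrix.mulVec, dotProduct, Pi.zero_apply] at this
    simpa [Finset.sum_apply, mcol, smul_eq_mul, mul_comm] using this
  have hyS : y S = eps T.1 i0 * u i0 := by
    rw [hy]
    show (∑ i : Fin a, if i ∉ T.1 ∧ insert i T.1 = S.1 then eps T.1 i * u i else 0) = _
    rw [Fintype.sum_eq_single i0]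
    · rw [if_pos ⟨Finset.notMem_erase i0 S.1, Finset.insert_erase hS⟩]
    · intro i hi
      rw [if_neg]
      rintro ⟨hiT, hins⟩
      have hmem : i0 ∈ insert i T.1 := hins ▸ hS
      rcases Finset.mem_insert.mp hmem with h | h
      · exact hi h.symm
      · exact (Finset.notMem_erase i0 S.1) h
  have hyS0 : y S ≠ 0 := by
    rw [hyS]
    refine mul_ne_zero ?_ hu
    unfold eps
    apply pow_ne_zero
    norm_num
  have hy0 : ∀ R : {X : Finset (Fin a) // X.card = p' + 1}, R ≠ S → i0 ∈ R.1 → y R = 0 := by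
    intro R hR hiR
    rw [hy]
    show (∑ i : Fin a, if i ∉ T.1 ∧ insert i T.1 = R.1 then eps T.1 i * u i else 0) = 0
    apply Finset.sum_eq_zero
    intro i _
    rw [if_neg]
    rintro ⟨hiT, hins⟩
    have hmem : i0 ∈ insert i T.1 := hins ▸ hiR
    rcases Finset.mem_insert.mp hmem with h | h
    · subst h
      exact hR (Subtype.ext (by rw [← hins, Finset.insert_erase hS]))
    · exact (Finset.notMem_erase i0 S.1) h
  -- split the sum
  rw [← Finset.sum_filter_add_sum_filter_not Finset.univ
      (fun R : {X : Finset (Fin a) // X.card = p' + 1} => i0 ∈ R.1)] at hsum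
  have hfirst : (∑ R ∈ Finset.univ.filter
      (fun R : {X : Finset (Fin a) // X.card = p' + 1} => i0 ∈ R.1),
        y R • mcol u (p' + 1) R) = y S • mcol u (p' + 1) S := by
    apply Finset.sum_eq_single_of_mem
    · simp [hS]
    · intro R hRmem hR
      rw [hy0 R hR (Finset.mem_filter.mp hRmem).2, zero_smul]
  rw [hfirst] at hsum
  have hmc : mcol u (p' + 1) S = (y S)⁻¹ • (y S • mcol u (p' + 1) S) := by
    rw [smul_smul, inv_mul_cancel₀ hyS0, one_smul]
  rw [hmc]
  apply Submodule.smul_mem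
  rw [eq_neg_of_add_eq_zero_left hsum]
  apply Submodule.neg_mem
  apply Submodule.sum_mem
  intro R hR
  apply Submodule.smul_mem
  apply Submodule.subset_span
  simp only [Finset.coe_image, Set.mem_image, Finset.mem_coe]
  exact ⟨R, hR, rfl⟩


lemma card_avoid {a : ℕ} (i0 : Fin a) (p : ℕ) :
    (Finset.univ.filter (fun R : {S : Finset (Fin a) // S.card = p} => i0 ∉ R.1)).card
      ≤ Nat.choose (a - 1) p := by
  classical
  have h := Finset.card_le_card_of_injOn (fun R : {S : Finset (Fin a) // S.card = p} => R.1)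
    (s := Finset.univ.filter (fun R : {S : Finset (Fin a) // S.card = p} => i0 ∉ R.1))
    (t := Finset.powersetCard p (Finset.univ.erase i0)) ?_ ?_
  · rwa [Finset.card_powersetCard, Finset.card_erase_of_mem (Finset.mem_univ i0),
      Finset.card_univ, Fintype.card_fin] at h
  · intro R hR
    rw [Finset.mem_coe, Finset.mem_powersetCard]
    refine ⟨fun x hx => ?_, R.2⟩
    rw [Finset.mem_erase]
    exact ⟨by rintro rfl; exact (Finset.mem_filter.mp hR).2 hx, Finset.mem_univ x⟩
  · intro x _ y _ h'
    exact Subtype.ext h'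


lemma rank_le_of_cols_mem {m n : Type*} [Fintype m] [Fintype n] (A : Matrix m n ℂ)
    (g : Finset (m → ℂ)) (h : ∀ q, Aᵀ q ∈ Submodule.span ℂ (g : Set (m → ℂ))) :
    A.rank ≤ g.card := by
  have e1 : A.rank = Module.finrank ℂ (Submodule.span ℂ (Set.range Aᵀ)) :=
    Matrix.rank_eq_finrank_span_cols _
  have e2 : Submodule.span ℂ (Set.range Aᵀ) ≤ Submodule.span ℂ (g : Set (m → ℂ)) := by
    rw [Submodule.span_le]
    rintro x ⟨q, rfl⟩
    exact h q
  have e3 : Set.finrank ℂ (g : Set (m → ℂ)) ≤ g.card := finrank_span_finset_le_card g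
  unfold Set.finrank at e3
  exact le_trans (e1 ▸ Submodule.finrank_mono e2) e3

set_option maxHeartbeats 1000000 in
lemma rank_one_bound {a b c : ℕ} (u : Fin a → ℂ) (v : Fin b → ℂ) (w : Fin c → ℂ) (p : ℕ) :
    (koszulFlattening (fun i j k => u i * v j * w k) p).rank ≤ Nat.choose (a - 1) p := by
  classical
  by_cases hu : u = 0
  · have hz : koszulFlattening (fun i j k => u i * v j * w k) p = 0 := by
      ext R C
      simp [koszulFlattening, hu]
    rw [hz, Matrix.rank_zero]
    exact Nat.zero_le _
  obtain ⟨i0, hi0⟩ : ∃ i0, u i0 ≠ 0 := by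
    by_contra h
    push_neg at h
    exact hu (funext h)
  set KF := koszulFlattening (fun i j k => u i * v j * w k) p with hKF
  set Φ : ({S : Finset (Fin a) // S.card = p + 1} → ℂ)
      →ₗ[ℂ] (({S : Finset (Fin a) // S.card = p + 1} × Fin c) → ℂ) :=
    { toFun := fun x q => x q.1 * w q.2
      map_add' := by intros x y; funext q; simp [add_mul]
      map_smul' := by intros m x; funext q; simp [smul_eq_mul]; ring } with hΦ
  set mfin : Finset ({S : Finset (Fin a) // S.card = p + 1} → ℂ) :=
    (Finset.univ.filter (fun R : {S : Finset (Fin a) // S.card = p} => i0 ∉ R.1)).image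
      (mcol u p) with hmfin
  set gfin : Finset (({S : Finset (Fin a) // S.card = p + 1} × Fin c) → ℂ) :=
    (Finset.univ.filter (fun R : {S : Finset (Fin a) // S.card = p} => i0 ∉ R.1)).image
      (fun R => Φ (mcol u p R)) with hgfin
  have hcol : ∀ q : {S : Finset (Fin a) // S.card = p} × Fin b,
      KFᵀ q ∈ Submodule.span ℂ (gfin : Set _) := by
    rintro ⟨S, j⟩
    have hc : KFᵀ (S, j) = v j • Φ (mcol u p S) := by
      funext q
      obtain ⟨S', k⟩ := q
      show (∑ i : Fin a, if i ∉ S.1 ∧ insert i S.1 = S'.1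
            then (-1 : ℂ) ^ (S.1.filter (fun j => j < i)).card * (u i * v j * w k) else 0)
          = v j * ((∑ i : Fin a, if i ∉ S.1 ∧ insert i S.1 = S'.1
            then eps S.1 i * u i else 0) * w k)
      rw [Finset.sum_mul, Finset.mul_sum]
      refine Finset.sum_congr rfl fun i _ => ?_
      unfold eps
      split_ifs
      · ring
      · simp
    rw [hc]
    apply Submodule.smul_mem
    have h1 := mcol_mem_span u i0 hi0 p S
    have h2 : Φ (mcol u p S) ∈ Submodule.span ℂ (Φ '' ((mfin : Finset _) : Set _)) := by
      rw [← Submodule.map_span]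
      exact Submodule.mem_map_of_mem h1
    have himg : Φ '' ((mfin : Finset _) : Set _) = (gfin : Set _) := by
      rw [hmfin, hgfin]
      simp [Finset.coe_image, Set.image_image]
    rwa [himg] at h2
  exact le_trans (rank_le_of_cols_mem KF gfin hcol)
    (le_trans Finset.card_image_le (card_avoid i0 p))

lemma kf_sum {a b c : ℕ} (r : ℕ) (u : Fin r → Fin a → ℂ) (v : Fin r → Fin b → ℂ)
    (w : Fin r → Fin c → ℂ) (p : ℕ) :
    koszulFlattening (fun i j k => ∑ s, u s i * v s j * w s k) p
      = ∑ s, koszulFlattening (fun i j k => u s i * v s j * w s k) p := by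
  ext R C
  rw [Matrix.sum_apply]
  unfold koszulFlattening
  rw [Finset.sum_comm]
  refine Finset.sum_congr rfl fun i _ => ?_
  split_ifs with h
  · rw [Finset.mul_sum]
  · simp

lemma rank_add_le {m n : Type*} [Fintype m] [Fintype n] (A B : Matrix m n ℂ) :
    (A + B).rank ≤ A.rank + B.rank := by
  have hle : LinearMap.range (A + B).mulVecLin
      ≤ LinearMap.range A.mulVecLin ⊔ LinearMap.range B.mulVecLin := by
    rintro x ⟨y, rfl⟩
    rw [Matrix.mulVecLin_add]
    exact Submodule.add_mem_sup ⟨y, rfl⟩ ⟨y, rfl⟩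
  calc (A + B).rank ≤ Module.finrank ℂ
        ↥(LinearMap.range A.mulVecLin ⊔ LinearMap.range B.mulVecLin) :=
      Submodule.finrank_mono hle
    _ ≤ A.rank + B.rank := Submodule.finrank_add_le_finrank_add_finrank _ _

lemma rank_sum_le {m n ι : Type*} [Fintype m] [Fintype n] (s : Finset ι)
    (A : ι → Matrix m n ℂ) : (∑ i ∈ s, A i).rank ≤ ∑ i ∈ s, (A i).rank := by
  classical
  induction s using Finset.induction_on with
  | empty => simp
  | insert _ _ h ih =>
    rw [Finset.sum_insert h, Finset.sum_insert h]
    exact le_trans (rank_add_le _ _) (add_le_add_right ih _)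

open scoped ComplexOrder in
lemma gram_det_zero {m n : Type*} [Fintype m] [Fintype n] (A : Matrix m n ℂ) (k : ℕ)
    (h : A.rank ≤ k) (g : Fin (k + 1) → n) :
    ((A.submatrix id g)ᴴ * A.submatrix id g).det = 0 := by
  classical
  set B := A.submatrix id g with hB
  by_contra hdet
  have hunit : IsUnit (Bᴴ * B) := (Matrix.isUnit_iff_isUnit_det _).mpr
    (isUnit_iff_ne_zero.mpr hdet)
  have h1 : (Bᴴ * B).rank = k + 1 := by
    rw [Matrix.rank_of_isUnit _ hunit, Fintype.card_fin]
  have h2 : (Bᴴ * B).rank = B.rank := Matrix.rank_conjTranspose_mul_self B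
  have h3 : B.rank ≤ A.rank := by
    rw [Matrix.rank_eq_finrank_span_cols, Matrix.rank_eq_finrank_span_cols]
    apply Submodule.finrank_mono
    apply Submodule.span_mono
    rintro x ⟨q, rfl⟩
    exact ⟨g q, rfl⟩
  omega

open scoped ComplexOrder in
lemma rank_le_of_gram {m n : Type*} [Fintype m] [Fintype n] [DecidableEq n] (A : Matrix m n ℂ)
    (k : ℕ)
    (h : ∀ g : Fin (k + 1) → n, ((A.submatrix id g)ᴴ * A.submatrix id g).det = 0) :
    A.rank ≤ k := by
  classical
  by_contra hlt
  push_neg at hlt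
  obtain ⟨s, hsub, hspan, hind⟩ := exists_linearIndependent ℂ (Set.range Aᵀ)
  have hfin : s.Finite := Set.Finite.subset (Set.finite_range Aᵀ) hsub
  haveI := hfin.fintype
  have hcard : Module.finrank ℂ (Submodule.span ℂ s) = s.toFinset.card :=
    finrank_span_set_eq_card hind
  have hrank : A.rank = Module.finrank ℂ (Submodule.span ℂ s) := by
    rw [Matrix.rank_eq_finrank_span_cols, hspan]; rfl
  have hk1 : k + 1 ≤ s.toFinset.card := by omega
  obtain ⟨t, hts, htc⟩ := Finset.exists_subset_card_eq hk1
  let e := (Finset.equivFinOfCardEq htc).symm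
  have hchoice : ∀ x : {x // x ∈ t}, (x : m → ℂ) ∈ Set.range Aᵀ := fun x =>
    hsub (by simpa using hts x.2)
  choose gq hgq using hchoice
  set g : Fin (k + 1) → n := fun i => gq (e i) with hgdef
  have hBind : LinearIndependent ℂ (fun i : Fin (k + 1) => Aᵀ (g i)) := by
    have heq : (fun i : Fin (k + 1) => Aᵀ (g i))
        = (Subtype.val : s → (m → ℂ)) ∘ (fun i : Fin (k + 1) =>
            (⟨((e i : {x // x ∈ t}) : m → ℂ), by simpa using hts (e i).2⟩ : s)) := by
      funext i
      simp [hgdef, hgq]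
    rw [heq]
    refine hind.comp _ fun i j hij => ?_
    have h1 : (e i : {x // x ∈ t}) = e j := Subtype.ext (by simpa using congrArg Subtype.val hij)
    exact e.injective h1
  set B := A.submatrix id g with hB
  have hBrank : B.rank = k + 1 := by
    have hBT : B.col = fun i => Aᵀ (g i) := rfl
    rw [Matrix.rank_eq_finrank_span_cols, hBT, finrank_span_eq_card hBind, Fintype.card_fin]
  obtain ⟨x, hx0, hxv⟩ := (Matrix.exists_mulVec_eq_zero_iff).mpr (h g)
  have hBx : B *ᵥ x = 0 := (Matrix.conjTranspose_mul_self_mulVec_eq_zero B x).mp hxv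
  have hsum : (∑ i, x i • Aᵀ (g i)) = 0 := by
    rw [← hBx]
    funext r
    rw [Finset.sum_apply]
    simp [Matrix.mulVec, dotProduct, B, mul_comm]
  exact hx0 (funext (Fintype.linearIndependent_iff.mp hBind x hsum))

lemma exists_decomp {a b c : ℕ} (T : Fin a → Fin b → Fin c → ℂ) :
    ∃ r : ℕ, ∃ u : Fin r → Fin a → ℂ, ∃ v : Fin r → Fin b → ℂ, ∃ w : Fin r → Fin c → ℂ,
      T = fun i j k => ∑ s, u s i * v s j * w s k := by
  classical
  refine ⟨Fintype.card (Fin a × Fin b × Fin c), ?_⟩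
  set e := (Fintype.equivFin (Fin a × Fin b × Fin c)).symm with he
  refine ⟨fun s i => if (e s).1 = i then 1 else 0,
    fun s j => if (e s).2.1 = j then 1 else 0,
    fun s k => if (e s).2.2 = k then T (e s).1 (e s).2.1 k else 0, ?_⟩
  funext i j k
  have hsum := Fintype.sum_equiv e
    (fun s => (if (e s).1 = i then (1 : ℂ) else 0) * (if (e s).2.1 = j then 1 else 0) *
      (if (e s).2.2 = k then T (e s).1 (e s).2.1 k else 0))
    (fun q : Fin a × Fin b × Fin c => (if q.1 = i then (1 : ℂ) else 0) *
      (if q.2.1 = j then 1 else 0) * (if q.2.2 = k then T q.1 q.2.1 k else 0))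
    (fun s => rfl)
  rw [hsum]
  simp [Fintype.sum_prod_type, ite_mul, zero_mul, one_mul, Finset.sum_ite_eq',
    Finset.mem_univ]



end KoszulAux

open Matrix

/-- The Koszul flattening lower bound for border rank:
`R̲(T) ≥ rank(T_A^{∧p}) / C(dim A − 1, p)`. -/
theorem koszul_flattening_bound {a b c : ℕ} (T : Fin a → Fin b → Fin c → ℂ) (p : ℕ) :
    (koszulFlattening T p).rank ≤ tBorderRank T * Nat.choose (a - 1) p := by
  classical
  set k := tBorderRank T * Nat.choose (a - 1) p with hk
  set F : Set (Fin a → Fin b → Fin c → ℂ) :=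
    {S | ∀ g : Fin (k + 1) → ({S : Finset (Fin a) // S.card = p} × Fin b),
      (((koszulFlattening S p).submatrix id g)ᴴ * ((koszulFlattening S p).submatrix id g)).det
        = 0} with hF
  have hKFcont : Continuous fun S : Fin a → Fin b → Fin c → ℂ => koszulFlattening S p := by
    apply continuous_matrix
    intro R C
    unfold koszulFlattening
    apply continuous_finset_sum
    intro i _
    apply Continuous.if_const
    · exact continuous_const.mul
        ((continuous_apply R.2).comp ((continuous_apply C.2).comp (continuous_apply i)))
    · exact continuous_const
  have hclosed : IsClosed F := by
    have hFi : F = ⋂ g : Fin (k + 1) → ({S : Finset (Fin a) // S.card = p} × Fin b),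
        {S | (((koszulFlattening S p).submatrix id g)ᴴ
          * ((koszulFlattening S p).submatrix id g)).det = 0} := by
      ext S
      simp only [hF, Set.mem_setOf_eq, Set.mem_iInter]
    rw [hFi]
    refine isClosed_iInter fun g => ?_
    have hcont : Continuous fun S : Fin a → Fin b → Fin c → ℂ =>
        (((koszulFlattening S p).submatrix id g)ᴴ
          * ((koszulFlattening S p).submatrix id g)).det :=
      Continuous.matrix_det
        ((Continuous.matrix_conjTranspose (hKFcont.matrix_submatrix id g)).matrix_mul
          (hKFcont.matrix_submatrix id g))
    exact isClosed_eq hcont continuous_const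
  have hne : {r : ℕ | T ∈ closure {S : Fin a → Fin b → Fin c → ℂ |
      ∃ u : Fin r → Fin a → ℂ, ∃ v : Fin r → Fin b → ℂ, ∃ w : Fin r → Fin c → ℂ,
        S = fun i j k => ∑ s, u s i * v s j * w s k}}.Nonempty := by
    obtain ⟨r, u, v, w, hT⟩ := KoszulAux.exists_decomp T
    exact ⟨r, subset_closure ⟨u, v, w, hT⟩⟩
  have hmemT : T ∈ closure {S : Fin a → Fin b → Fin c → ℂ |
      ∃ u : Fin (tBorderRank T) → Fin a → ℂ, ∃ v : Fin (tBorderRank T) → Fin b → ℂ,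
        ∃ w : Fin (tBorderRank T) → Fin c → ℂ,
        S = fun i j k => ∑ s, u s i * v s j * w s k} := Nat.sInf_mem hne
  have hsub : {S : Fin a → Fin b → Fin c → ℂ |
      ∃ u : Fin (tBorderRank T) → Fin a → ℂ, ∃ v : Fin (tBorderRank T) → Fin b → ℂ,
        ∃ w : Fin (tBorderRank T) → Fin c → ℂ,
        S = fun i j k => ∑ s, u s i * v s j * w s k} ⊆ F := by
    rintro S ⟨u, v, w, rfl⟩
    intro g
    refine KoszulAux.gram_det_zero _ k ?_ g
    rw [KoszulAux.kf_sum]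
    calc (∑ s, koszulFlattening (fun i j k => u s i * v s j * w s k) p).rank
        ≤ ∑ s : Fin (tBorderRank T),
            (koszulFlattening (fun i j k => u s i * v s j * w s k) p).rank :=
          KoszulAux.rank_sum_le _ _
      _ ≤ ∑ _s : Fin (tBorderRank T), Nat.choose (a - 1) p :=
          Finset.sum_le_sum fun s _ => KoszulAux.rank_one_bound _ _ _ _
      _ = k := by
          rw [Finset.sum_const, Finset.card_univ, Fintype.card_fin, smul_eq_mul, hk]
  have hTF : T ∈ F := closure_minimal hsub hclosed hmemT
  exact KoszulAux.rank_le_of_gram _ k hTF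
end

section
/- Every nonzero element of the span T_{cw,2}^{⊠k}(C*) = ⟨Σ_{σ∈ℤ₂^k} σ·(a_{i_1,…,i_k} ⊗ b_{j_1,…,j_k}) : i_α ≠ j_α for all α⟩ ⊂ ℂ^{3^k} ⊗ ℂ^{3^k}, where σ acts by swapping corresponding indices in each slot, has matrix rank at least 2^k. -/
open scoped BigOperators

/-- The tensor `T_{cw,2} = Σ_{σ ∈ S₃} a_{σ(1)} ⊗ b_{σ(2)} ⊗ c_{σ(3)}` in `ℂ³ ⊗ ℂ³ ⊗ ℂ³`. -/
noncomputable def Tcw2 : Fin 3 → Fin 3 → Fin 3 → ℂ := fun i j k =>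
  ∑ σ : Equiv.Perm (Fin 3), if i = σ 0 ∧ j = σ 1 ∧ k = σ 2 then 1 else 0

lemma tcw_card (i j l : Fin 3) :
    (Finset.univ.filter fun σ : Equiv.Perm (Fin 3) => i = σ 0 ∧ j = σ 1 ∧ l = σ 2).card
      = if i ≠ j ∧ j ≠ l ∧ i ≠ l then 1 else 0 := by
  revert i j l; decide

lemma tcw_eq (i j l : Fin 3) :
    Tcw2 i j l = if i ≠ j ∧ j ≠ l ∧ i ≠ l then 1 else 0 := by
  have : Tcw2 i j l
      = ((Finset.univ.filter fun σ : Equiv.Perm (Fin 3) =>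
          i = σ 0 ∧ j = σ 1 ∧ l = σ 2).card : ℂ) := by
    simp [Tcw2, Finset.sum_boole]
  rw [this, tcw_card]
  split <;> simp

/-- `pick c b` gives the two elements of `Fin 3` different from `c`. -/
def pick : Fin 3 → Bool → Fin 3
  | 0, false => 1 | 0, true => 2
  | 1, false => 0 | 1, true => 2
  | 2, false => 0 | 2, true => 1

lemma tcw_pick (c l : Fin 3) (s : Bool) :
    Tcw2 (pick c s) (pick c (!s)) l = if l = c then 1 else 0 := by
  have h : (pick c s ≠ pick c (!s) ∧ pick c (!s) ≠ l ∧ pick c s ≠ l) ↔ l = c := by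
    revert c l s; decide
  rw [tcw_eq, if_congr h rfl rfl]

/-- Every nonzero element of the image `T_{cw,2}^{⊠k}(C*) ⊆ ℂ^{3^k} ⊗ ℂ^{3^k}` (where the
`k`-th Kronecker power is indexed by `Fin k → Fin 3`) has matrix rank at least `2^k`. -/
theorem Tcw2_kronPow_image_rank_ge (k : ℕ) (γ : (Fin k → Fin 3) → ℂ)
    (hne : (Matrix.of fun i j : Fin k → Fin 3 =>
        ∑ l : Fin k → Fin 3, γ l * ∏ α, Tcw2 (i α) (j α) (l α)) ≠ 0) :
    2 ^ k ≤ (Matrix.of fun i j : Fin k → Fin 3 =>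
        ∑ l : Fin k → Fin 3, γ l * ∏ α, Tcw2 (i α) (j α) (l α)).rank := by
  classical
  set M : Matrix (Fin k → Fin 3) (Fin k → Fin 3) ℂ :=
    Matrix.of fun i j : Fin k → Fin 3 =>
      ∑ l : Fin k → Fin 3, γ l * ∏ α, Tcw2 (i α) (j α) (l α) with hM
  obtain ⟨i₀, j₀, h0⟩ : ∃ i j, M i j ≠ 0 := by
    by_contra h; push_neg at h
    exact hne (by ext i j; simpa using h i j)
  have h0' : (∑ l : Fin k → Fin 3, γ l * ∏ α, Tcw2 (i₀ α) (j₀ α) (l α)) ≠ 0 := h0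
  obtain ⟨l₀, -, hl₀⟩ := Finset.exists_ne_zero_of_sum_ne_zero h0'
  have hγ : γ l₀ ≠ 0 := left_ne_zero_of_mul hl₀
  set r : (Fin k → Bool) → (Fin k → Fin 3) := fun s α => pick (l₀ α) (s α) with hr
  set c : (Fin k → Bool) → (Fin k → Fin 3) := fun t α => pick (l₀ α) (!(t α)) with hc
  have key : ∀ s t, M (r s) (c t) = if s = t then γ l₀ else 0 := by
    intro s t
    by_cases hst : s = t
    · subst hst
      rw [if_pos rfl]
      have hprod : ∀ l : Fin k → Fin 3,
          (∏ α, Tcw2 (r s α) (c s α) (l α)) = if l = l₀ then 1 else 0 := by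
        intro l
        have h1 : ∀ α, Tcw2 (r s α) (c s α) (l α) = if l α = l₀ α then 1 else 0 :=
          fun α => tcw_pick (l₀ α) (l α) (s α)
        rw [Finset.prod_congr rfl (fun α _ => h1 α)]
        by_cases hl : l = l₀
        · subst hl; simp
        · rw [if_neg hl]
          obtain ⟨α, hα⟩ := Function.ne_iff.mp hl
          exact Finset.prod_eq_zero (Finset.mem_univ α) (by rw [if_neg hα])
      show (∑ l : Fin k → Fin 3, γ l * ∏ α, Tcw2 (r s α) (c s α) (l α)) = γ l₀
      simp [hprod, mul_ite]
    · rw [if_neg hst]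
      obtain ⟨α, hα⟩ := Function.ne_iff.mp hst
      have hb : s α = !(t α) := by
        cases hs : s α <;> cases ht : t α <;> simp_all
      show (∑ l : Fin k → Fin 3, γ l * ∏ α, Tcw2 (r s α) (c t α) (l α)) = 0
      refine Finset.sum_eq_zero fun l _ => ?_
      have heq : r s α = c t α := by rw [hr, hc]; simp [hb]
      have hz : Tcw2 (r s α) (c t α) (l α) = 0 := by
        rw [heq, tcw_eq]; simp
      rw [Finset.prod_eq_zero (Finset.mem_univ α) hz, mul_zero]
  set E : Matrix (Fin k → Bool) (Fin k → Fin 3) ℂ :=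
    Matrix.of fun s i => if i = r s then 1 else 0 with hE
  set F : Matrix (Fin k → Fin 3) (Fin k → Bool) ℂ :=
    Matrix.of fun j t => if j = c t then 1 else 0 with hF
  have hMF : ∀ i t, (M * F) i t = M i (c t) := by
    intro i t
    simp [Matrix.mul_apply, hF, mul_ite]
  have hEF : E * (M * F) = Matrix.diagonal fun _ : Fin k → Bool => γ l₀ := by
    ext s t
    rw [Matrix.mul_apply]
    simp only [hE, Matrix.of_apply, ite_mul, one_mul, zero_mul]
    rw [Finset.sum_ite_eq' Finset.univ (r s) fun i => (M * F) i t]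
    simp [hMF, key, Matrix.diagonal_apply]
  have h1 : (E * (M * F)).rank = 2 ^ k := by
    rw [hEF, Matrix.rank_diagonal]
    simp only [ne_eq, hγ, not_false_eq_true]
    rw [Fintype.card_eq.mpr ⟨Equiv.subtypeUnivEquiv fun _ => trivial⟩]
    simp
  calc (2 : ℕ) ^ k = (E * (M * F)).rank := h1.symm
    _ ≤ (M * F).rank := Matrix.rank_mul_le_right _ _
    _ ≤ M.rank := Matrix.rank_mul_le_left _ _
end
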